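/- If a nontrivial group G admits a locally invariant partial ordering, then G admits uncountably many locally invariant partial orderings (i.e., the set of locally invariant partial orderings of G is uncountable). -/

import Mathlib

namespace Stmt14Aux

variable {G : Type*} [Group G]

/-- A finite nonempty set has a maximal element with respect to any irreflexive
transitive relation. -/
lemma exists_rel_maximal (rel : G → G → Prop)
    (hirr : ∀ x, ¬ rel x x)
    (htr : ∀ a b c, rel a b → rel b c → rel a c)
    (s : Finset G) : s.Nonempty → ∃ m ∈ s, ∀ y ∈ s, ¬ rel m y := by
  classical
  induction s using Finset.induction_on with
  | empty => rintro ⟨x, hx⟩; simp at hx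
  | @insert a s ha ih =>
    intro _
    rcases s.eq_empty_or_nonempty with rfl | hs'
    · refine ⟨a, by simp, ?_⟩
      intro y hy
      simp only [Finset.mem_insert, Finset.notMem_empty, or_false] at hy
      rw [hy]; exact hirr a
    · obtain ⟨m, hm, hmax⟩ := ih hs'
      by_cases hma : rel m a
      · refine ⟨a, Finset.mem_insert_self _ _, ?_⟩
        intro y hy hay
        rcases Finset.mem_insert.mp hy with rfl | hy'
        · exact hirr _ hay
        · exact hmax y hy' (htr _ _ _ hma hay)
      · refine ⟨m, Finset.mem_insert_of_mem hm, ?_⟩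
        intro y hy hmy
        rcases Finset.mem_insert.mp hy with rfl | hy'
        · exact hma hmy
        · exact hmax y hy' hmy

/-- A group with a locally invariant partial order has no torsion. -/
lemma pow_ne_one (r : G → G → Prop)
    (hirr : ∀ x, ¬ r x x)
    (htr : ∀ a b c, r a b → r b c → r a c)
    (hLI : ∀ x k : G, k ≠ 1 → r x (k * x) ∨ r x (k⁻¹ * x))
    (g : G) (hg : g ≠ 1) : ∀ k : ℕ, g ^ (k + 1) ≠ 1 := by
  intro k hk
  classical
  set S : Finset G := (Finset.range (k + 1)).image (fun i => g ^ i) with hS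
  have hpow : ∀ i : ℕ, g ^ i ∈ S := by
    intro i
    have hmod : g ^ i = g ^ (i % (k + 1)) := by
      conv_lhs => rw [← Nat.div_add_mod i (k + 1)]
      rw [pow_add, pow_mul, hk, one_pow, one_mul]
    rw [hmod]
    exact Finset.mem_image.mpr ⟨_, Finset.mem_range.mpr (Nat.mod_lt _ (Nat.succ_pos k)), rfl⟩
  have hne : S.Nonempty := ⟨g ^ 0, hpow 0⟩
  obtain ⟨m, hmS, hmax⟩ := exists_rel_maximal r hirr htr S hne
  obtain ⟨i, -, rfl⟩ := Finset.mem_image.mp hmS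
  have h1 : g * g ^ i = g ^ (i + 1) := (pow_succ' g i).symm
  have h2 : g⁻¹ * g ^ i ∈ S := by
    cases i with
    | zero =>
      have hiv : g⁻¹ = g ^ k := by
        have : g * g ^ k = 1 := by rw [← pow_succ']; exact hk
        exact inv_eq_of_mul_eq_one_right this
      simpa [hiv] using hpow k
    | succ j =>
      have : g⁻¹ * g ^ (j + 1) = g ^ j := by
        rw [pow_succ', inv_mul_cancel_left]
      rw [this]; exact hpow j
  rcases hLI (g ^ i) g hg with hr | hr
  · exact hmax _ (by rw [h1]; exact hpow (i + 1)) hr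
  · exact hmax _ h2 hr

end Stmt14Aux

/-- If a nontrivial group admits a locally invariant partial ordering,
it admits uncountably many. -/
theorem stmt14 {G : Type*} [Group G] [Nontrivial G]
    (h : ∃ r : G → G → Prop,
      (∀ g : G, ¬ r g g) ∧
      (∀ a b c : G, r a b → r b c → r a c) ∧
      (∀ g h : G, h ≠ 1 → r g (h * g) ∨ r g (h⁻¹ * g))) :
    ¬ Set.Countable { r : G → G → Prop |
      (∀ g : G, ¬ r g g) ∧
      (∀ a b c : G, r a b → r b c → r a c) ∧
      (∀ g h : G, h ≠ 1 → r g (h * g) ∨ r g (h⁻¹ * g)) } := by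
  intro hC
  obtain ⟨r, hirr, htr, hLI⟩ := h
  obtain ⟨g, hg⟩ := exists_ne (1 : G)
  have hpow : ∀ k : ℕ, g ^ (k + 1) ≠ 1 := Stmt14Aux.pow_ne_one r hirr htr hLI g hg
  -- powers of g are injective
  have hordinj : ∀ n m : ℕ, g ^ n = g ^ m → n = m := by
    have key : ∀ n m : ℕ, n < m → g ^ n = g ^ m → False := by
      intro n m hlt hnm
      have hsplit : g ^ n * g ^ (m - n) = g ^ m := by
        rw [← pow_add]; congr 1; omega
      have hcan : g ^ n * g ^ (m - n) = g ^ n * 1 := by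
        rw [mul_one, hsplit, hnm]
      have h1 : g ^ (m - n) = 1 := mul_left_cancel hcan
      have h2 : m - n - 1 + 1 = m - n := by omega
      exact hpow (m - n - 1) (by rw [h2]; exact h1)
    intro n m hnm
    rcases Nat.lt_trichotomy n m with hlt | he | hlt
    · exact absurd hnm (fun hh => key n m hlt hh)
    · exact he
    · exact absurd hnm.symm (fun hh => key m n hlt hh)
  -- Zorn: a maximal locally invariant partial order containing r
  set S0 : Set (Set (G × G)) := { p | (∀ x : G, (x, x) ∉ p) ∧
      (∀ a b c : G, (a, b) ∈ p → (b, c) ∈ p → (a, c) ∈ p) ∧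
      (∀ x k : G, k ≠ 1 → (x, k * x) ∈ p ∨ (x, k⁻¹ * x) ∈ p) } with hS0def
  have hr0 : { q : G × G | r q.1 q.2 } ∈ S0 :=
    ⟨fun x => hirr x, fun a b c hab hbc => htr a b c hab hbc, fun x k hk => hLI x k hk⟩
  have hub : ∀ c ⊆ S0, IsChain (· ⊆ ·) c → c.Nonempty →
      ∃ ub ∈ S0, ∀ s ∈ c, s ⊆ ub := by
    intro c hcS hchain hcne
    refine ⟨⋃₀ c, ⟨?_, ?_, ?_⟩, fun s hs => Set.subset_sUnion_of_mem hs⟩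
    · rintro x ⟨p, hp, hxp⟩
      exact (hcS hp).1 x hxp
    · rintro a b d ⟨p, hp, hab⟩ ⟨q, hq, hbd⟩
      by_cases hpq : p = q
      · subst hpq; exact ⟨p, hp, (hcS hp).2.1 a b d hab hbd⟩
      · rcases hchain hp hq hpq with hsub | hsub
        · exact ⟨q, hq, (hcS hq).2.1 a b d (hsub hab) hbd⟩
        · exact ⟨p, hp, (hcS hp).2.1 a b d hab (hsub hbd)⟩
    · intro x k hk
      obtain ⟨p, hp⟩ := hcne
      rcases (hcS hp).2.2 x k hk with hh | hh
      · exact Or.inl ⟨p, hp, hh⟩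
      · exact Or.inr ⟨p, hp, hh⟩
  obtain ⟨m, hrm, hmax⟩ := zorn_subset_nonempty S0 hub _ hr0
  have hmS0 : m ∈ S0 := hmax.prop
  obtain ⟨tirr', ttr', tLI'⟩ := hmS0
  set t : G → G → Prop := fun x y => (x, y) ∈ m with htdef
  have tirr : ∀ x, ¬ t x x := tirr'
  have ttr : ∀ a b c, t a b → t b c → t a c := ttr'
  have tLI : ∀ x k : G, k ≠ 1 → t x (k * x) ∨ t x (k⁻¹ * x) := tLI'
  -- maximality gives totality
  have ttot : ∀ x y : G, x ≠ y → t x y ∨ t y x := by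
    intro a b hab
    by_contra hcon
    push_neg at hcon
    obtain ⟨h1, h2⟩ := hcon
    set m' : Set (G × G) := m ∪ { q | (q.1 = a ∨ (q.1, a) ∈ m) ∧ (q.2 = b ∨ (b, q.2) ∈ m) }
      with hm'def
    have hba : ∀ x : G, (x = a ∨ (x, a) ∈ m) → (x = b ∨ (b, x) ∈ m) → False := by
      intro x hxa hxb
      rcases hxa with rfl | hxa
      · rcases hxb with hb | hb
        · exact hab hb
        · exact h2 hb
      · rcases hxb with rfl | hb
        · exact h2 hxa
        · exact h2 (ttr' _ _ _ hb hxa)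
    have hm'S0 : m' ∈ S0 := by
      refine ⟨?_, ?_, ?_⟩
      · rintro x (hx | ⟨hxa, hxb⟩)
        · exact tirr' x hx
        · exact hba x hxa hxb
      · rintro p q d (hpq | ⟨hpa, hqb⟩) hqd
        · rcases hqd with hqd | ⟨hqa, hdb⟩
          · exact Or.inl (ttr' _ _ _ hpq hqd)
          · refine Or.inr ⟨?_, hdb⟩
            rcases hqa with rfl | hqa
            · exact Or.inr hpq
            · exact Or.inr (ttr' _ _ _ hpq hqa)
        · rcases hqd with hqd | ⟨hqa, hdb⟩
          · refine Or.inr ⟨hpa, ?_⟩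
            rcases hqb with rfl | hqb
            · exact Or.inr hqd
            · exact Or.inr (ttr' _ _ _ hqb hqd)
          · exact (hba q hqa hqb).elim
      · intro x k hk
        rcases tLI' x k hk with hh | hh
        · exact Or.inl (Or.inl hh)
        · exact Or.inr (Or.inl hh)
    have hmm' : m ⊆ m' := Set.subset_union_left
    have : m' ⊆ m := hmax.2 hm'S0 hmm'
    exact h1 (this (Or.inr ⟨Or.inl rfl, Or.inl rfl⟩))
  -- the "absolute value" order
  set S' : G → G → Prop := fun x y => (t x y ∨ t x y⁻¹) ∧ (t x⁻¹ y ∨ t x⁻¹ y⁻¹) with hS'def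
  have S'irr : ∀ x, ¬ S' x x := by
    rintro x ⟨hx1, hx2⟩
    rcases hx1 with hx1 | hx1
    · exact tirr x hx1
    · rcases hx2 with hx2 | hx2
      · exact tirr x (ttr _ _ _ hx1 hx2)
      · exact tirr x⁻¹ hx2
  have S'ninv : ∀ x : G, ¬ S' x x⁻¹ := by
    rintro x ⟨hx1, hx2⟩
    rw [inv_inv] at hx1 hx2
    rcases hx1 with hx1 | hx1
    · rcases hx2 with hx2 | hx2
      · exact tirr x⁻¹ hx2
      · exact tirr x (ttr _ _ _ hx1 hx2)
    · exact tirr x hx1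
  have S'tr : ∀ x y z, S' x y → S' y z → S' x z := by
    rintro x y z ⟨hx1, hx2⟩ ⟨hy1, hy2⟩
    constructor
    · rcases hx1 with hx1 | hx1
      · rcases hy1 with hy1 | hy1
        · exact Or.inl (ttr _ _ _ hx1 hy1)
        · exact Or.inr (ttr _ _ _ hx1 hy1)
      · rcases hy2 with hy2 | hy2
        · exact Or.inl (ttr _ _ _ hx1 hy2)
        · exact Or.inr (ttr _ _ _ hx1 hy2)
    · rcases hx2 with hx2 | hx2
      · rcases hy1 with hy1 | hy1
        · exact Or.inl (ttr _ _ _ hx2 hy1)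
        · exact Or.inr (ttr _ _ _ hx2 hy1)
      · rcases hy2 with hy2 | hy2
        · exact Or.inl (ttr _ _ _ hx2 hy2)
        · exact Or.inr (ttr _ _ _ hx2 hy2)
  have S'invl : ∀ x y, S' x y → S' x⁻¹ y := by
    rintro x y ⟨hx1, hx2⟩
    exact ⟨hx2, by rw [inv_inv]; exact hx1⟩
  have S'invr : ∀ x y, S' x y → S' x y⁻¹ := by
    rintro x y ⟨hx1, hx2⟩
    constructor
    · rw [inv_inv]; exact hx1.symm
    · rw [inv_inv]; exact hx2.symm
  -- the key: S' is locally invariant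
  have core : ∀ x u v : G, t x u → t x⁻¹ v⁻¹ → ¬ S' x u → ¬ S' x v → False := by
    intro x u v hxu hxv hSu hSv
    have h2 : ¬ (t x⁻¹ u ∨ t x⁻¹ u⁻¹) := fun hh => hSu ⟨Or.inl hxu, hh⟩
    push_neg at h2
    have h1 : ¬ (t x v ∨ t x v⁻¹) := fun hh => hSv ⟨hh, Or.inr hxv⟩
    push_neg at h1
    have hxx1 : t x⁻¹ x := by
      by_cases hxe : v⁻¹ = x
      · rw [hxe] at hxv; exact hxv
      · rcases ttot v⁻¹ x hxe with h3 | h3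
        · exact ttr _ _ _ hxv h3
        · exact absurd h3 h1.2
    have hxx2 : t x x⁻¹ := by
      by_cases hue : u = x⁻¹
      · rw [hue] at hxu; exact hxu
      · rcases ttot u x⁻¹ hue with h3 | h3
        · exact ttr _ _ _ hxu h3
        · exact absurd h3 h2.1
    exact tirr x (ttr _ _ _ hxx2 hxx1)
  have hkey : ∀ x k : G, k ≠ 1 → S' x (k * x) ∨ S' x (k⁻¹ * x) := by
    intro x k hk
    by_contra hcon
    push_neg at hcon
    obtain ⟨hA, hB⟩ := hcon
    have F1 := tLI x k hk
    have hk2 : x⁻¹ * k⁻¹ * x ≠ 1 := by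
      intro hh
      apply hk
      rw [mul_assoc] at hh
      have hx1 : x = k⁻¹ * x := inv_mul_eq_one.mp hh
      have hk1 : k⁻¹ * x = x := hx1.symm
      rw [mul_eq_right] at hk1
      exact inv_eq_one.mp hk1
    have F2 := tLI x⁻¹ (x⁻¹ * k⁻¹ * x) hk2
    have e1 : x⁻¹ * k⁻¹ * x * x⁻¹ = (k * x)⁻¹ := by group
    have e2 : (x⁻¹ * k⁻¹ * x)⁻¹ * x⁻¹ = (k⁻¹ * x)⁻¹ := by group
    rw [e1, e2] at F2
    rcases F1 with f1 | f1 <;> rcases F2 with f2 | f2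
    · exact hA ⟨Or.inl f1, Or.inr f2⟩
    · exact core x (k * x) (k⁻¹ * x) f1 f2 hA hB
    · exact core x (k⁻¹ * x) (k * x) f1 f2 hB hA
    · exact hB ⟨Or.inl f1, Or.inr f2⟩
  -- the uncountable family
  set Φ : Set ℕ → (G → G → Prop) :=
    fun A x y => S' x y ∨ (y = x⁻¹ ∧ ∃ n ∈ A, x = g ^ (n + 1)) with hΦdef
  have hmemΦ : ∀ A : Set ℕ, Φ A ∈ { r : G → G → Prop |
      (∀ g : G, ¬ r g g) ∧
      (∀ a b c : G, r a b → r b c → r a c) ∧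
      (∀ g h : G, h ≠ 1 → r g (h * g) ∨ r g (h⁻¹ * g)) } := by
    intro A
    refine ⟨?_, ?_, ?_⟩
    · rintro x (hx | ⟨hxi, n, -, rfl⟩)
      · exact S'irr x hx
      · have h1 : g ^ (n + 1) * g ^ (n + 1) = 1 := by
          have he : g ^ (n + 1) * g ^ (n + 1) = g ^ (n + 1) * (g ^ (n + 1))⁻¹ := by
            rw [← hxi]
          rw [he, mul_inv_cancel]
        have h2 : g ^ (n + 1 + (n + 1)) = 1 := by rw [pow_add]; exact h1
        have h3 : n + 1 + (n + 1) = (n + n + 1) + 1 := by omega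
        exact hpow (n + n + 1) (by rw [← h3]; exact h2)
    · rintro x y z (hxy | ⟨rfl, n, hn, rfl⟩) hyz
      · rcases hyz with hyz | ⟨rfl, n, hn, rfl⟩
        · exact Or.inl (S'tr _ _ _ hxy hyz)
        · exact Or.inl (S'invr _ _ hxy)
      · rcases hyz with hyz | ⟨hzi, n', hn', hy'⟩
        · have := S'invl (g ^ (n + 1))⁻¹ z hyz
          rw [inv_inv] at this
          exact Or.inl this
        · exfalso
          have h1 : g ^ (n' + 1) * g ^ (n + 1) = 1 := by
            rw [← hy', inv_mul_cancel]
          have h2 : g ^ (n' + 1 + (n + 1)) = 1 := by rw [pow_add]; exact h1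
          have h3 : n' + 1 + (n + 1) = (n' + n + 1) + 1 := by omega
          exact hpow (n' + n + 1) (by rw [← h3]; exact h2)
    · intro x k hk
      rcases hkey x k hk with hh | hh
      · exact Or.inl (Or.inl hh)
      · exact Or.inr (Or.inl hh)
  have hval : ∀ (C : Set ℕ) (n : ℕ), (Φ C (g ^ (n + 1)) (g ^ (n + 1))⁻¹) ↔ n ∈ C := by
    intro C n
    constructor
    · rintro (hS | ⟨-, n', hn', heq⟩)
      · exact absurd hS (S'ninv _)
      · have : n + 1 = n' + 1 := hordinj _ _ heq
        have : n = n' := by omega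
        rwa [this]
    · intro hn
      exact Or.inr ⟨rfl, n, hn, rfl⟩
  have hinj : Function.Injective Φ := by
    intro A B hAB
    ext n
    have hiff : (Φ A (g ^ (n + 1)) (g ^ (n + 1))⁻¹) ↔ (Φ B (g ^ (n + 1)) (g ^ (n + 1))⁻¹) :=
      iff_of_eq (congrFun (congrFun hAB (g ^ (n + 1))) ((g ^ (n + 1))⁻¹))
    exact ((hval A n).symm.trans (hiff.trans (hval B n)))
  -- conclude with Cantor
  have hcs : Countable ↥{ r : G → G → Prop |
      (∀ g : G, ¬ r g g) ∧
      (∀ a b c : G, r a b → r b c → r a c) ∧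
      (∀ g h : G, h ≠ 1 → r g (h * g) ∨ r g (h⁻¹ * g)) } := hC.to_subtype
  obtain ⟨f, hf⟩ := Countable.exists_injective_nat ↥{ r : G → G → Prop |
      (∀ g : G, ¬ r g g) ∧
      (∀ a b c : G, r a b → r b c → r a c) ∧
      (∀ g h : G, h ≠ 1 → r g (h * g) ∨ r g (h⁻¹ * g)) }
  refine Function.cantor_injective (f ∘ fun A => ⟨Φ A, hmemΦ A⟩) ?_
  intro A B hAB
  exact hinj (congrArg Subtype.val (hf hAB))
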